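/- (Multiplicativity of M.) Let Φ = (w₁,w₂) : Ω → Ω' and Ψ = (u₁,u₂) : Ω' → Ω'' be holomorphic maps between open subsets of ℂ². Then at every point p ∈ Ω, M(w₁,w₂;x,y)(p) · M(u₁,u₂;w₁,w₂)(Φ(p)) = M(ũ₁,ũ₂;x,y)(p), where (ũ₁,ũ₂) := Ψ ∘ Φ, M(u₁,u₂;w₁,w₂) is the matrix M formed from the partial derivatives of u₁,u₂ with respect to (w₁,w₂), and M(ũ₁,ũ₂;x,y) is formed from the partial derivatives of the composite with respect to (x,y). -/

import Mathlib

open Complex Matrix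

noncomputable section

/-- Partial derivative in the first complex variable. -/
def pdx (f : ℂ × ℂ → ℂ) (p : ℂ × ℂ) : ℂ := deriv (fun x => f (x, p.2)) p.1

/-- Partial derivative in the second complex variable. -/
def pdy (f : ℂ × ℂ → ℂ) (p : ℂ × ℂ) : ℂ := deriv (fun y => f (p.1, y)) p.2

/-- The Jacobian `J(u₁,u₂) = ∂ₓu₁·∂ᵧu₂ − ∂ₓu₂·∂ᵧu₁`. -/
def Jac (u₁ u₂ : ℂ × ℂ → ℂ) (p : ℂ × ℂ) : ℂ :=
  pdx u₁ p * pdy u₂ p - pdx u₂ p * pdy u₁ p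

/-- The GL(3) derivative `{u₁,u₂;x,y}ₓ`. -/
def brX (u₁ u₂ : ℂ × ℂ → ℂ) (p : ℂ × ℂ) : ℂ :=
  (pdx u₁ p * pdx (pdx u₂) p - pdx u₂ p * pdx (pdx u₁) p) / Jac u₁ u₂ p

/-- The GL(3) derivative `{u₁,u₂;x,y}ᵧ`. -/
def brY (u₁ u₂ : ℂ × ℂ → ℂ) (p : ℂ × ℂ) : ℂ :=
  -(pdy u₁ p * pdy (pdy u₂) p - pdy u₂ p * pdy (pdy u₁) p) / Jac u₁ u₂ p

/-- The GL(3) derivative `[u₁,u₂;x,y]ₓ`. -/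
def sqX (u₁ u₂ : ℂ × ℂ → ℂ) (p : ℂ × ℂ) : ℂ :=
  ((pdy u₁ p * pdx (pdx u₂) p - pdy u₂ p * pdx (pdx u₁) p)
      + 2 * (pdx u₁ p * pdx (pdy u₂) p - pdx u₂ p * pdx (pdy u₁) p)) / Jac u₁ u₂ p

/-- The GL(3) derivative `[u₁,u₂;x,y]ᵧ`. -/
def sqY (u₁ u₂ : ℂ × ℂ → ℂ) (p : ℂ × ℂ) : ℂ :=
  -((pdx u₁ p * pdy (pdy u₂) p - pdx u₂ p * pdy (pdy u₁) p)
      + 2 * (pdy u₁ p * pdx (pdy u₂) p - pdy u₂ p * pdx (pdy u₁) p)) / Jac u₁ u₂ p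

/-- The 4×4 matrix `M(w₁,w₂;x,y)` built from the first partial derivatives of
the holomorphic map `(w₁,w₂)`. -/
def Mmat (w₁ w₂ : ℂ × ℂ → ℂ) (p : ℂ × ℂ) : Matrix (Fin 4) (Fin 4) ℂ :=
  !![(pdx w₁ p) ^ 3, -(pdx w₂ p) ^ 3, (pdx w₁ p) ^ 2 * pdx w₂ p,
        -(pdx w₁ p) * (pdx w₂ p) ^ 2;
     -(pdy w₁ p) ^ 3, (pdy w₂ p) ^ 3, -(pdy w₁ p) ^ 2 * pdy w₂ p,
        (pdy w₁ p) * (pdy w₂ p) ^ 2;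
     3 * (pdx w₁ p) ^ 2 * pdy w₁ p, -3 * (pdx w₂ p) ^ 2 * pdy w₂ p,
        (pdx w₁ p) ^ 2 * pdy w₂ p + 2 * pdx w₁ p * pdx w₂ p * pdy w₁ p,
        -(pdx w₂ p) ^ 2 * pdy w₁ p - 2 * pdx w₁ p * pdx w₂ p * pdy w₂ p;
     -3 * pdx w₁ p * (pdy w₁ p) ^ 2, 3 * pdx w₂ p * (pdy w₂ p) ^ 2,
        -(pdx w₂ p) * (pdy w₁ p) ^ 2 - 2 * pdx w₁ p * pdy w₁ p * pdy w₂ p,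
        (pdx w₁ p) * (pdy w₂ p) ^ 2 + 2 * pdx w₂ p * pdy w₁ p * pdy w₂ p]

/-- The column vector of the four GL(3) derivatives of the pair `(u₁,u₂)`. -/
def Vvec (u₁ u₂ : ℂ × ℂ → ℂ) (p : ℂ × ℂ) : Fin 4 → ℂ :=
  ![brX u₁ u₂ p, brY u₁ u₂ p, sqX u₁ u₂ p, sqY u₁ u₂ p]


lemma pdx_eq_fderiv (u : ℂ × ℂ → ℂ) (q : ℂ × ℂ) (hu : DifferentiableAt ℂ u q) :
    pdx u q = fderiv ℂ u q (1, 0) := by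
  have h1 : HasDerivAt (fun x : ℂ => (x, q.2)) ((1:ℂ), (0:ℂ)) q.1 := by
    simpa using (hasDerivAt_id q.1).prodMk (hasDerivAt_const q.1 q.2)
  have h2 : HasDerivAt (fun x : ℂ => u (x, q.2)) (fderiv ℂ u q (1, 0)) q.1 := by
    have := (hu.hasFDerivAt.comp_hasDerivAt q.1 (by simpa using h1))
    simpa [Function.comp_def] using this
  exact h2.deriv

lemma pdy_eq_fderiv (u : ℂ × ℂ → ℂ) (q : ℂ × ℂ) (hu : DifferentiableAt ℂ u q) :
    pdy u q = fderiv ℂ u q (0, 1) := by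
  have h1 : HasDerivAt (fun y : ℂ => (q.1, y)) ((0:ℂ), (1:ℂ)) q.2 := by
    simpa using (hasDerivAt_const q.2 q.1).prodMk (hasDerivAt_id q.2)
  have h2 : HasDerivAt (fun y : ℂ => u (q.1, y)) (fderiv ℂ u q (0, 1)) q.2 := by
    have := (hu.hasFDerivAt.comp_hasDerivAt q.2 (by simpa using h1))
    simpa [Function.comp_def] using this
  exact h2.deriv

lemma pdx_comp (u w₁ w₂ : ℂ × ℂ → ℂ) (p : ℂ × ℂ)
    (h1 : DifferentiableAt ℂ w₁ p) (h2 : DifferentiableAt ℂ w₂ p)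
    (hu : DifferentiableAt ℂ u (w₁ p, w₂ p)) :
    pdx (fun q => u (w₁ q, w₂ q)) p
      = pdx u (w₁ p, w₂ p) * pdx w₁ p + pdy u (w₁ p, w₂ p) * pdx w₂ p := by
  have hg1 : HasDerivAt (fun x => w₁ (x, p.2)) (pdx w₁ p) p.1 := by
    have d1 : DifferentiableAt ℂ (fun x : ℂ => w₁ (x, p.2)) p.1 := by
      exact (by simpa using h1 : DifferentiableAt ℂ w₁ (p.1, p.2)).comp p.1
        (differentiableAt_id.prodMk (differentiableAt_const _))
    exact d1.hasDerivAt
  have hg2 : HasDerivAt (fun x => w₂ (x, p.2)) (pdx w₂ p) p.1 := by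
    have d2 : DifferentiableAt ℂ (fun x : ℂ => w₂ (x, p.2)) p.1 := by
      exact (by simpa using h2 : DifferentiableAt ℂ w₂ (p.1, p.2)).comp p.1
        (differentiableAt_id.prodMk (differentiableAt_const _))
    exact d2.hasDerivAt
  have hprod := hg1.prodMk hg2
  have hcomp : HasDerivAt (fun x => u (w₁ (x, p.2), w₂ (x, p.2)))
      (fderiv ℂ u (w₁ p, w₂ p) (pdx w₁ p, pdx w₂ p)) p.1 := by
    have := hu.hasFDerivAt.comp_hasDerivAt p.1 (by simpa using hprod)
    simpa [Function.comp_def] using this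
  have key : pdx (fun q => u (w₁ q, w₂ q)) p
      = fderiv ℂ u (w₁ p, w₂ p) (pdx w₁ p, pdx w₂ p) := hcomp.deriv
  rw [key, pdx_eq_fderiv u _ hu, pdy_eq_fderiv u _ hu]
  have : (pdx w₁ p, pdx w₂ p) = pdx w₁ p • ((1:ℂ), (0:ℂ)) + pdx w₂ p • ((0:ℂ), (1:ℂ)) := by
    simp [Prod.ext_iff]
  rw [this, map_add, (fderiv ℂ u (w₁ p, w₂ p)).map_smul, (fderiv ℂ u (w₁ p, w₂ p)).map_smul]
  simp [mul_comm]

lemma pdy_comp (u w₁ w₂ : ℂ × ℂ → ℂ) (p : ℂ × ℂ)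
    (h1 : DifferentiableAt ℂ w₁ p) (h2 : DifferentiableAt ℂ w₂ p)
    (hu : DifferentiableAt ℂ u (w₁ p, w₂ p)) :
    pdy (fun q => u (w₁ q, w₂ q)) p
      = pdx u (w₁ p, w₂ p) * pdy w₁ p + pdy u (w₁ p, w₂ p) * pdy w₂ p := by
  have hg1 : HasDerivAt (fun y => w₁ (p.1, y)) (pdy w₁ p) p.2 := by
    have d1 : DifferentiableAt ℂ (fun y : ℂ => w₁ (p.1, y)) p.2 := by
      exact (by simpa using h1 : DifferentiableAt ℂ w₁ (p.1, p.2)).comp p.2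
        ((differentiableAt_const _).prodMk differentiableAt_id)
    exact d1.hasDerivAt
  have hg2 : HasDerivAt (fun y => w₂ (p.1, y)) (pdy w₂ p) p.2 := by
    have d2 : DifferentiableAt ℂ (fun y : ℂ => w₂ (p.1, y)) p.2 := by
      exact (by simpa using h2 : DifferentiableAt ℂ w₂ (p.1, p.2)).comp p.2
        ((differentiableAt_const _).prodMk differentiableAt_id)
    exact d2.hasDerivAt
  have hprod := hg1.prodMk hg2
  have hcomp : HasDerivAt (fun y => u (w₁ (p.1, y), w₂ (p.1, y)))
      (fderiv ℂ u (w₁ p, w₂ p) (pdy w₁ p, pdy w₂ p)) p.2 := by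
    have := hu.hasFDerivAt.comp_hasDerivAt p.2 (by simpa using hprod)
    simpa [Function.comp_def] using this
  have key : pdy (fun q => u (w₁ q, w₂ q)) p
      = fderiv ℂ u (w₁ p, w₂ p) (pdy w₁ p, pdy w₂ p) := hcomp.deriv
  rw [key, pdx_eq_fderiv u _ hu, pdy_eq_fderiv u _ hu]
  have : (pdy w₁ p, pdy w₂ p) = pdy w₁ p • ((1:ℂ), (0:ℂ)) + pdy w₂ p • ((0:ℂ), (1:ℂ)) := by
    simp [Prod.ext_iff]
  rw [this, map_add, (fderiv ℂ u (w₁ p, w₂ p)).map_smul, (fderiv ℂ u (w₁ p, w₂ p)).map_smul]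
  simp [mul_comm]

def Mraw (a b c d : ℂ) : Matrix (Fin 4) (Fin 4) ℂ :=
  !![a ^ 3, -b ^ 3, a ^ 2 * b, -a * b ^ 2;
     -c ^ 3, d ^ 3, -c ^ 2 * d, c * d ^ 2;
     3 * a ^ 2 * c, -3 * b ^ 2 * d, a ^ 2 * d + 2 * a * b * c, -b ^ 2 * c - 2 * a * b * d;
     -3 * a * c ^ 2, 3 * b * d ^ 2, -b * c ^ 2 - 2 * a * c * d, a * d ^ 2 + 2 * b * c * d]

lemma Mmat_eq_Mraw (w₁ w₂ : ℂ × ℂ → ℂ) (p : ℂ × ℂ) :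
    Mmat w₁ w₂ p = Mraw (pdx w₁ p) (pdx w₂ p) (pdy w₁ p) (pdy w₂ p) := rfl

set_option maxHeartbeats 2000000 in
lemma Mraw_mul (a b c d A B C D : ℂ) :
    Mraw a b c d * Mraw A B C D
      = Mraw (A * a + C * b) (B * a + D * b) (A * c + C * d) (B * c + D * d) := by
  ext i j
  fin_cases i <;> fin_cases j <;>
    · simp [Mraw, Matrix.mul_apply, Fin.sum_univ_four]
      ring

/-- Multiplicativity of the matrix `M` under composition of
holomorphic maps: `M(Φ;x,y)·M(Ψ;w₁,w₂)∘Φ = M(Ψ∘Φ;x,y)`. -/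
theorem statement5 (Ω Ω' Ω'' : Set (ℂ × ℂ))
    (hΩ : IsOpen Ω) (hΩ' : IsOpen Ω') (hΩ'' : IsOpen Ω'')
    (w₁ w₂ : ℂ × ℂ → ℂ)
    (hw₁ : DifferentiableOn ℂ w₁ Ω) (hw₂ : DifferentiableOn ℂ w₂ Ω)
    (hmaps : ∀ p ∈ Ω, (w₁ p, w₂ p) ∈ Ω')
    (u₁ u₂ : ℂ × ℂ → ℂ)
    (hu₁ : DifferentiableOn ℂ u₁ Ω') (hu₂ : DifferentiableOn ℂ u₂ Ω')
    (hmaps' : ∀ q ∈ Ω', (u₁ q, u₂ q) ∈ Ω'') :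
    ∀ p ∈ Ω,
      Mmat w₁ w₂ p * Mmat u₁ u₂ (w₁ p, w₂ p) =
        Mmat (fun q => u₁ (w₁ q, w₂ q)) (fun q => u₂ (w₁ q, w₂ q)) p := by
  intro p hp
  have hd1 := hw₁.differentiableAt (hΩ.mem_nhds hp)
  have hd2 := hw₂.differentiableAt (hΩ.mem_nhds hp)
  have hmem := hmaps p hp
  have hdu1 := hu₁.differentiableAt (hΩ'.mem_nhds hmem)
  have hdu2 := hu₂.differentiableAt (hΩ'.mem_nhds hmem)
  have hA := pdx_comp u₁ w₁ w₂ p hd1 hd2 hdu1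
  have hB := pdx_comp u₂ w₁ w₂ p hd1 hd2 hdu2
  have hC := pdy_comp u₁ w₁ w₂ p hd1 hd2 hdu1
  have hD := pdy_comp u₂ w₁ w₂ p hd1 hd2 hdu2
  rw [Mmat_eq_Mraw, Mmat_eq_Mraw, Mmat_eq_Mraw, hA, hB, hC, hD]
  exact Mraw_mul _ _ _ _ _ _ _ _
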